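/- Let 𝔾 = Z_{𝕞_1} × ⋯ × Z_{𝕞_n} with fixed generators 𝕘_1,…,𝕘_n, and let Φ_a be the 3-cocycle on 𝔾 with parameters a_l, a_{st}, a_{rst} given by the standard formula. Suppose some a_{rst} ≠ 0 for r < s < t (i.e., Φ_a is non-abelian). Then for any positive integers l_1,…,l_n divisible respectively by 𝕞_1,…,𝕞_n and the canonical epimorphism π : Z_{l_1} × ⋯ × Z_{l_n} → 𝔾 sending the i-th generator to 𝕘_i, the pull-back π*(Φ_a) is not a 3-coboundary. -/

import Mathlib

open Finset

/-- A fixed primitive `m`-th root of unity in `ℂ`. -/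
noncomputable def zeta (m : ℕ) : ℂ :=
  Complex.exp (2 * (Real.pi : ℂ) * Complex.I / (m : ℂ))

/-- The standard 3-cocycle `Φ_a` on `𝔾 = Z_{𝕞_1} × ⋯ × Z_{𝕞_n}`. -/
noncomputable def Phi3 {n : ℕ} (mm : Fin n → ℕ)
    (a1 : Fin n → ℕ) (a2 : Fin n → Fin n → ℕ) (a3 : Fin n → Fin n → Fin n → ℕ)
    (x y z : ∀ l, ZMod (mm l)) : ℂ :=
  (∏ l, zeta (mm l) ^ (a1 l * (x l).val * (((y l).val + (z l).val) / mm l))) *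
  (∏ s, ∏ t, if s < t then
      zeta (mm t) ^ (a2 s t * (x t).val * (((y s).val + (z s).val) / mm s)) else 1) *
  (∏ r, ∏ s, ∏ t, if r < s ∧ s < t then
      zeta (Nat.gcd (Nat.gcd (mm r) (mm s)) (mm t)) ^
        (-((a3 r s t * (z r).val * (y s).val * (x t).val : ℕ) : ℤ)) else 1)

lemma Phi3_eval {n : ℕ} (mm : Fin n → ℕ) (hmm : ∀ i, 0 < mm i)
    (a1 : Fin n → ℕ) (a2 : Fin n → Fin n → ℕ) (a3 : Fin n → Fin n → Fin n → ℕ)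
    (i0 j0 k0 : Fin n) (hij : i0 ≠ j0) (hmi : 2 ≤ mm i0) (hmj : 2 ≤ mm j0)
    (x y z : ∀ l, ZMod (mm l))
    (hx : ∀ l, (x l).val = if l = k0 then 1 else 0)
    (hy : ∀ l, (y l).val = if l = j0 then 1 else 0)
    (hz : ∀ l, (z l).val = if l = i0 then 1 else 0) :
    Phi3 mm a1 a2 a3 x y z =
      if i0 < j0 ∧ j0 < k0 then
        zeta (Nat.gcd (Nat.gcd (mm i0) (mm j0)) (mm k0)) ^ (-(a3 i0 j0 k0 : ℤ))
      else 1 := by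
  have hsum : ∀ l, ((y l).val + (z l).val) / mm l = 0 := by
    intro l
    apply Nat.div_eq_of_lt
    rw [hy, hz]
    by_cases h1 : l = j0 <;> by_cases h2 : l = i0
    · exact absurd (h2.symm.trans h1) hij
    · simp [h1, Ne.symm hij]
      omega
    · simp [h2, hij]
      omega
    · simpa [h1, h2] using hmm l
  unfold Phi3
  rw [show (∏ l, zeta (mm l) ^ (a1 l * (x l).val * (((y l).val + (z l).val) / mm l))) = 1 by
    simp [hsum]]
  rw [show (∏ s, ∏ t, if s < t then
      zeta (mm t) ^ (a2 s t * (x t).val * (((y s).val + (z s).val) / mm s)) else 1) = 1 by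
    simp [hsum]]
  rw [one_mul, one_mul]
  rw [Finset.prod_eq_single i0 (fun b _ hb => by
        have hzb : (z b).val = 0 := by rw [hz]; simp [hb]
        simp [hzb])
      (by simp)]
  rw [Finset.prod_eq_single j0 (fun b _ hb => by
        have hyb : (y b).val = 0 := by rw [hy]; simp [hb]
        simp [hyb])
      (by simp)]
  rw [Finset.prod_eq_single k0 (fun b _ hb => by
        have hxb : (x b).val = 0 := by rw [hx]; simp [hb]
        simp [hxb])
      (by simp)]
  have hx1 : (x k0).val = 1 := by rw [hx]; simp
  have hy1 : (y j0).val = 1 := by rw [hy]; simp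
  have hz1 : (z i0).val = 1 := by rw [hz]; simp
  rw [hx1, hy1, hz1]
  simp

theorem stmt_8 {n : ℕ} (mm : Fin n → ℕ) (hmm : ∀ i, 0 < mm i)
    (a1 : Fin n → ℕ) (ha1 : ∀ i, a1 i < mm i)
    (a2 : Fin n → Fin n → ℕ) (ha2 : ∀ s t : Fin n, s < t → a2 s t < Nat.gcd (mm s) (mm t))
    (a3 : Fin n → Fin n → Fin n → ℕ)
    (ha3 : ∀ r s t : Fin n, r < s → s < t →
      a3 r s t < Nat.gcd (Nat.gcd (mm r) (mm s)) (mm t))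
    (hna : ∃ r s t : Fin n, r < s ∧ s < t ∧ a3 r s t ≠ 0)
    (l : Fin n → ℕ) (hl : ∀ i, 0 < l i) (hdvd : ∀ i, mm i ∣ l i)
    (π : (∀ i, ZMod (l i)) → ∀ i, ZMod (mm i))
    (hπ : ∀ x i, π x i = ((x i).val : ZMod (mm i))) :
    ¬ ∃ J : (∀ i, ZMod (l i)) → (∀ i, ZMod (l i)) → ℂˣ,
        ∀ x y z : ∀ i, ZMod (l i),
          Phi3 mm a1 a2 a3 (π x) (π y) (π z) =
            ↑(J y z * J x (y + z) * (J (x + y) z)⁻¹ * (J x y)⁻¹) := by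
  obtain ⟨r, s, t, hrs, hst, hane⟩ := hna
  rintro ⟨J, hJ⟩
  set g := Nat.gcd (Nat.gcd (mm r) (mm s)) (mm t) with hg
  have hg2 : 2 ≤ g := by have h := ha3 r s t hrs hst; omega
  have hgr : g ∣ mm r := dvd_trans (Nat.gcd_dvd_left _ _) (Nat.gcd_dvd_left _ _)
  have hgs : g ∣ mm s := dvd_trans (Nat.gcd_dvd_left _ _) (Nat.gcd_dvd_right _ _)
  have hgt : g ∣ mm t := Nat.gcd_dvd_right _ _
  have hmr : 2 ≤ mm r := le_trans hg2 (Nat.le_of_dvd (hmm r) hgr)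
  have hms : 2 ≤ mm s := le_trans hg2 (Nat.le_of_dvd (hmm s) hgs)
  have hmt : 2 ≤ mm t := le_trans hg2 (Nat.le_of_dvd (hmm t) hgt)
  -- support computation for π of basis vectors
  have hval : ∀ k : Fin n, 2 ≤ mm k →
      ∀ i, (π (Pi.single k (1 : ZMod (l k))) i).val = if i = k then 1 else 0 := by
    intro k hk i
    haveI : NeZero (mm i) := ⟨(hmm i).ne'⟩
    haveI : NeZero (l i) := ⟨(hl i).ne'⟩
    rw [hπ]
    by_cases h : i = k
    · subst h
      have h2 : 2 ≤ l i := le_trans hk (Nat.le_of_dvd (hl i) (hdvd i))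
      haveI : Fact (1 < l i) := ⟨h2⟩
      haveI : Fact (1 < mm i) := ⟨hk⟩
      rw [Pi.single_eq_same, ZMod.val_one, Nat.cast_one, ZMod.val_one, if_pos rfl]
    · rw [Pi.single_eq_of_ne h, if_neg h]
      simp
  set X : ∀ i, ZMod (l i) := Pi.single t 1 with hXdef
  set Y : ∀ i, ZMod (l i) := Pi.single s 1 with hYdef
  set Z : ∀ i, ZMod (l i) := Pi.single r 1 with hZdef
  have hX := hval t hmt
  have hY := hval s hms
  have hZ := hval r hmr
  have h1 : Phi3 mm a1 a2 a3 (π X) (π Y) (π Z) = zeta g ^ (-(a3 r s t : ℤ)) := by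
    rw [Phi3_eval mm hmm a1 a2 a3 r s t hrs.ne hmr hms _ _ _ hX hY hZ,
      if_pos ⟨hrs, hst⟩]
  have h2 : Phi3 mm a1 a2 a3 (π Y) (π Z) (π X) = 1 := by
    rw [Phi3_eval mm hmm a1 a2 a3 t r s (hrs.trans hst).ne' hmt hmr _ _ _ hY hZ hX,
      if_neg (fun h => absurd h.1 (asymm (hrs.trans hst)))]
  have h3 : Phi3 mm a1 a2 a3 (π Z) (π X) (π Y) = 1 := by
    rw [Phi3_eval mm hmm a1 a2 a3 s t r hst.ne hms hmt _ _ _ hZ hX hY,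
      if_neg (fun h => absurd h.2 (asymm (hrs.trans hst)))]
  have h4 : Phi3 mm a1 a2 a3 (π Y) (π X) (π Z) = 1 := by
    rw [Phi3_eval mm hmm a1 a2 a3 r t s (hrs.trans hst).ne hmr hmt _ _ _ hY hX hZ,
      if_neg (fun h => absurd h.2 (asymm hst))]
  have h5 : Phi3 mm a1 a2 a3 (π X) (π Z) (π Y) = 1 := by
    rw [Phi3_eval mm hmm a1 a2 a3 s r t hrs.ne' hms hmr _ _ _ hX hZ hY,
      if_neg (fun h => absurd h.1 (asymm hrs))]
  have h6 : Phi3 mm a1 a2 a3 (π Z) (π Y) (π X) = 1 := by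
    rw [Phi3_eval mm hmm a1 a2 a3 t s r hst.ne' hmt hms _ _ _ hZ hY hX,
      if_neg (fun h => absurd h.1 (asymm hst))]
  -- the coboundary equations in ℂ
  have hJc : ∀ x y z : ∀ i, ZMod (l i),
      Phi3 mm a1 a2 a3 (π x) (π y) (π z) =
        (J y z : ℂ) * (J x (y + z) : ℂ) * ((J (x + y) z : ℂ))⁻¹ * ((J x y : ℂ))⁻¹ := by
    intro x y z
    rw [hJ x y z]
    simp [Units.val_mul]
  have e1 := hJc X Y Z; rw [h1] at e1
  have e2 := hJc Y Z X; rw [h2] at e2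
  have e3 := hJc Z X Y; rw [h3] at e3
  have e4 := hJc Y X Z; rw [h4] at e4
  have e5 := hJc X Z Y; rw [h5] at e5
  have e6 := hJc Z Y X; rw [h6] at e6
  have hne : ∀ a b : ∀ i, ZMod (l i), (J a b : ℂ) ≠ 0 := fun a b => Units.ne_zero _
  have key : zeta g ^ (-(a3 r s t : ℤ)) = 1 := by
    calc zeta g ^ (-(a3 r s t : ℤ))
        = ((J Y Z : ℂ) * (J X (Y + Z) : ℂ) * ((J (X + Y) Z : ℂ))⁻¹ * ((J X Y : ℂ))⁻¹) *
          ((J Z X : ℂ) * (J Y (Z + X) : ℂ) * ((J (Y + Z) X : ℂ))⁻¹ * ((J Y Z : ℂ))⁻¹) *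
          ((J X Y : ℂ) * (J Z (X + Y) : ℂ) * ((J (Z + X) Y : ℂ))⁻¹ * ((J Z X : ℂ))⁻¹) := by
          rw [← e2, ← e3, e1, mul_one, mul_one]
      _ = ((J X Z : ℂ) * (J Y (X + Z) : ℂ) * ((J (Y + X) Z : ℂ))⁻¹ * ((J Y X : ℂ))⁻¹) *
          ((J Z Y : ℂ) * (J X (Z + Y) : ℂ) * ((J (X + Z) Y : ℂ))⁻¹ * ((J X Z : ℂ))⁻¹) *
          ((J Y X : ℂ) * (J Z (Y + X) : ℂ) * ((J (Z + Y) X : ℂ))⁻¹ * ((J Z Y : ℂ))⁻¹) := by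
          rw [add_comm Y X, add_comm Z Y, add_comm Z X]
          have n1 := hne (X + Y) Z
          have n2 := hne (Y + Z) X
          have n3 := hne (X + Z) Y
          have n4 := hne X Y
          have n5 := hne Y Z
          have n6 := hne Z X
          have n7 := hne Y X
          have n8 := hne Z Y
          have n9 := hne X Z
          field_simp
      _ = 1 := by rw [← e4, ← e5, ← e6, mul_one, mul_one]
  have hprim : IsPrimitiveRoot (zeta g) g := by
    have := Complex.isPrimitiveRoot_exp g (by omega)
    simpa [zeta] using this
  have hp : zeta g ^ (a3 r s t) ≠ 1 :=
    hprim.pow_ne_one_of_pos_of_lt hane (ha3 r s t hrs hst)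
  apply hp
  rwa [zpow_neg, zpow_natCast, inv_eq_one] at key
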